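/- Let σ : ℝ → ℝ denote the sign function, let I : ℝ → ℝ be a function, and let y : ℝ → ℝ be differentiable with y(t) ∈ (−1, 1) for all t. Then y satisfies the linear phase equation y'(t) = (1 − I(t))·|y(t)| + I(t) for all t if and only if the function x(t) = −σ(y(t))·log(1 − |y(t)|) is differentiable and satisfies x'(t) = e^{|x(t)|} − 1 + I(t) for all t. -/

import Mathlib

open Real Filter Set Topology

lemma gkey {u : ℝ} (hu : u ∈ Set.Ioo (-1:ℝ) 1) :
    HasDerivAt (fun v : ℝ => -Real.sign v * Real.log (1 - |v|)) (1/(1-|u|)) u := by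
  obtain ⟨h1, h2⟩ := hu
  rcases lt_trichotomy u 0 with h | h | h
  · have hne : (1:ℝ) + u ≠ 0 := by linarith
    have hd : HasDerivAt (fun v : ℝ => Real.log (1 + v)) (1/(1+u)) u := by
      have := (Real.hasDerivAt_log hne).comp u ((hasDerivAt_id u).const_add 1)
      simpa [one_div, Function.comp_def, Pi.neg_def] using this
    have heq : (1:ℝ)/(1-|u|) = 1/(1+u) := by rw [abs_of_neg h]; ring_nf
    rw [heq]
    apply hd.congr_of_eventuallyEq
    filter_upwards [Iio_mem_nhds h] with v hv
    have hv' : v < 0 := hv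
    simp [Real.sign_of_neg hv', abs_of_neg hv', sub_neg_eq_add]
  · subst h
    have hf : HasDerivAt (fun v : ℝ => -Real.log (1 - v)) 1 0 := by
      have := ((Real.hasDerivAt_log (by norm_num : (1:ℝ)-0 ≠ 0)).comp 0
        ((hasDerivAt_id 0).const_sub 1)).neg
      simpa [Function.comp_def, Pi.neg_def] using this
    have habs : Tendsto (fun v : ℝ => |v|) (𝓝[≠] (0:ℝ)) (𝓝[≠] (0:ℝ)) := by
      rw [tendsto_nhdsWithin_iff]
      constructor
      · have : Tendsto (fun v : ℝ => |v|) (𝓝 (0:ℝ)) (𝓝 |(0:ℝ)|) := continuous_abs.tendsto 0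
        simpa using this.mono_left nhdsWithin_le_nhds
      · filter_upwards [self_mem_nhdsWithin] with v hv
        simpa using abs_ne_zero.mpr hv
    have hslope := hasDerivAt_iff_tendsto_slope.1 hf
    have hcomp := hslope.comp habs
    simp only [abs_zero]
    rw [show (1:ℝ)/(1-0) = 1 by norm_num]
    rw [hasDerivAt_iff_tendsto_slope]
    apply hcomp.congr'
    filter_upwards [self_mem_nhdsWithin] with v hv
    have hv0 : v ≠ 0 := hv
    simp only [Function.comp, slope_def_field, Real.sign_zero, abs_zero, Real.log_one,
      neg_zero, zero_mul, mul_zero, sub_zero]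
    rcases hv0.lt_or_gt with hneg | hpos
    · rw [Real.sign_of_neg hneg, abs_of_neg hneg, sub_neg_eq_add]
      ring
    · rw [Real.sign_of_pos hpos, abs_of_pos hpos]
      ring
  · have hne : (1:ℝ) - u ≠ 0 := by linarith
    have hd : HasDerivAt (fun v : ℝ => -Real.log (1 - v)) (1/(1-u)) u := by
      have := ((Real.hasDerivAt_log hne).comp u ((hasDerivAt_id u).const_sub 1)).neg
      simpa [one_div, Function.comp_def, Pi.neg_def] using this
    have heq : (1:ℝ)/(1-|u|) = 1/(1-u) := by rw [abs_of_pos h]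
    rw [heq]
    apply hd.congr_of_eventuallyEq
    filter_upwards [Ioi_mem_nhds h] with v hv
    have hv' : (0:ℝ) < v := hv
    simp [Real.sign_of_pos hv', abs_of_pos hv']

theorem linear_phase_dual_to_exp_IF
    (I : ℝ → ℝ) (y : ℝ → ℝ) (hy : Differentiable ℝ y)
    (hyJ : ∀ t, y t ∈ Set.Ioo (-1 : ℝ) 1) :
    (∀ t, deriv y t = (1 - I t) * |y t| + I t) ↔
      (Differentiable ℝ (fun t => -Real.sign (y t) * Real.log (1 - |y t|)) ∧
        ∀ t, deriv (fun s => -Real.sign (y s) * Real.log (1 - |y s|)) t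
          = Real.exp |(-Real.sign (y t) * Real.log (1 - |y t|))| - 1 + I t) := by
  have hpos : ∀ t, 0 < 1 - |y t| := by
    intro t
    obtain ⟨h1, h2⟩ := hyJ t
    have := abs_lt.mpr ⟨h1, h2⟩
    linarith
  have hchain : ∀ t, HasDerivAt (fun s => -Real.sign (y s) * Real.log (1 - |y s|))
      (1/(1-|y t|) * deriv y t) t := fun t => (gkey (hyJ t)).comp t (hy t).hasDerivAt
  have habs : ∀ t, |(-Real.sign (y t) * Real.log (1 - |y t|))| = -Real.log (1 - |y t|) := by
    intro t
    rcases eq_or_ne (y t) 0 with h | h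
    · simp [h]
    · have hs : |Real.sign (y t)| = 1 := by
        rcases h.lt_or_gt with h' | h'
        · rw [Real.sign_of_neg h']; norm_num
        · rw [Real.sign_of_pos h']; norm_num
      rw [abs_mul, abs_neg, hs, one_mul, abs_of_nonpos]
      exact Real.log_nonpos (le_of_lt (hpos t)) (by have := abs_nonneg (y t); linarith)
  have hexp : ∀ t, Real.exp |(-Real.sign (y t) * Real.log (1 - |y t|))| = 1/(1-|y t|) := by
    intro t
    rw [habs t, Real.exp_neg, Real.exp_log (hpos t), one_div]
  constructor
  · intro h
    refine ⟨fun t => (hchain t).differentiableAt, fun t => ?_⟩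
    rw [(hchain t).deriv, h t, hexp t]
    have hne := (hpos t).ne'
    field_simp
    ring
  · rintro ⟨hdiff, h⟩ t
    have h1 := (hchain t).deriv
    rw [h t, hexp t] at h1
    have hne := (hpos t).ne'
    field_simp at h1
    nlinarith [h1, hpos t]
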